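/- Fix α ∈ (0,1). Let f_α : (0,∞) → [0,∞) be a measurable function with ∫₀^∞ f_α(t) dt = 1 and ∫₀^∞ e^{-λ t} f_α(t) dt = e^{-λ^α} for all λ ≥ 0. Then for every integer m ≥ 1 and every λ > 0, ∫₀^∞ t^m e^{-λ t} f_α(t) dt = α e^{-λ^α} λ^{α-m} Ω_m(λ^α). In particular ∫₀^∞ t e^{-λ t} f_α(t) dt = α λ^{α-1} e^{-λ^α}. -/

import Mathlib

open MeasureTheory Set

/-- The rising factorial `(x)_m = x (x+1) ⋯ (x+m-1)`. -/
noncomputable def risingFactorial (x : ℝ) (m : ℕ) : ℝ := ∏ i ∈ Finset.range m, (x + i)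

/-- The generalized Stirling number
`S_α(m,k) = (1/(α^k k!)) Σ_{j=1}^k (-1)^j C(k,j) (-jα)_m`. -/
noncomputable def genStirling (α : ℝ) (m k : ℕ) : ℝ :=
  (1 / (α ^ k * (Nat.factorial k : ℝ))) *
    ∑ j ∈ Finset.Icc 1 k, (-1 : ℝ) ^ j * (Nat.choose k j : ℝ) * risingFactorial (-(j : ℝ) * α) m

noncomputable def Tsum (α : ℝ) (m k : ℕ) : ℝ :=
  ∑ j ∈ Finset.Icc 1 k, (-1 : ℝ) ^ j * (Nat.choose k j : ℝ) * risingFactorial (-(j : ℝ) * α) m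

lemma genStirling_eq (α : ℝ) (m k : ℕ) :
    genStirling α m k = (1 / (α ^ k * (Nat.factorial k : ℝ))) * Tsum α m k := rfl

lemma risingFactorial_succ (x : ℝ) (m : ℕ) :
    risingFactorial x (m + 1) = risingFactorial x m * (x + m) := Finset.prod_range_succ _ _

lemma risingFactorial_zero (x : ℝ) : risingFactorial x 0 = 1 := Finset.prod_range_zero _

lemma choose_id (k j : ℕ) (hk : 1 ≤ k) (hj : j ≤ k) :
    ((k : ℝ) - j) * (Nat.choose k j : ℝ) = (k : ℝ) * (Nat.choose (k - 1) j : ℝ) := by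
  obtain ⟨n, rfl⟩ : ∃ n, k = n + 1 := ⟨k - 1, by omega⟩
  have h : (n + 1) * Nat.choose n j = Nat.choose (n + 1) j * (n + 1 - j) :=
    (Nat.add_one_mul_choose_eq n j).trans (Nat.choose_succ_right_eq (n + 1) j)
  have hcast := congrArg (fun x : ℕ => (x : ℝ)) h
  push_cast [Nat.cast_sub hj] at hcast
  simp only [Nat.add_sub_cancel]
  push_cast
  linarith [hcast]

lemma Tsum_rec (α : ℝ) (m k : ℕ) (hk : 1 ≤ k) :
    Tsum α (m + 1) k = α * k * Tsum α m (k - 1) + ((m : ℝ) - α * k) * Tsum α m k := by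
  have key : Tsum α (m+1) k
      = ((m : ℝ) - α * k) * Tsum α m k
        + α * ∑ j ∈ Finset.Icc 1 k,
            (-1 : ℝ) ^ j * (((k:ℝ) - j) * (Nat.choose k j : ℝ)) * risingFactorial (-(j:ℝ) * α) m := by
    unfold Tsum
    rw [Finset.mul_sum, Finset.mul_sum, ← Finset.sum_add_distrib]
    refine Finset.sum_congr rfl fun j hj => ?_
    rw [risingFactorial_succ]
    ring
  have key2 : ∑ j ∈ Finset.Icc 1 k,
      (-1 : ℝ) ^ j * (((k:ℝ) - j) * (Nat.choose k j : ℝ)) * risingFactorial (-(j:ℝ) * α) m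
      = (k : ℝ) * Tsum α m (k - 1) := by
    have : ∀ j ∈ Finset.Icc 1 k,
        (-1 : ℝ) ^ j * (((k:ℝ) - j) * (Nat.choose k j : ℝ)) * risingFactorial (-(j:ℝ) * α) m
        = (k : ℝ) * ((-1 : ℝ) ^ j * (Nat.choose (k-1) j : ℝ) * risingFactorial (-(j:ℝ) * α) m) := by
      intro j hj
      simp only [Finset.mem_Icc] at hj
      rw [choose_id k j hk hj.2]; ring
    rw [Finset.sum_congr rfl this, ← Finset.mul_sum]
    congr 1
    unfold Tsum
    rw [Finset.sum_subset (Finset.Icc_subset_Icc_right (Nat.sub_le k 1))]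
    intro j hj hj'
    simp only [Finset.mem_Icc] at hj hj'
    have : k - 1 < j := by omega
    rw [Nat.choose_eq_zero_of_lt this]
    simp
  rw [key, key2]; ring

lemma Tsum_zero_right (α : ℝ) (k : ℕ) (hk : 1 ≤ k) : Tsum α 0 k = -1 := by
  unfold Tsum
  simp only [risingFactorial_zero, mul_one]
  have h := Int.alternating_sum_range_choose_of_ne (show k ≠ 0 by omega)
  have h' : ((∑ i ∈ Finset.range (k + 1), (-1 : ℤ) ^ i * (Nat.choose k i : ℤ) : ℤ) : ℝ) = 0 := by
    rw [h]; simp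
  push_cast at h'
  rw [Finset.sum_range_succ'] at h'
  have : ∑ j ∈ Finset.Icc 1 k, (-1 : ℝ) ^ j * (Nat.choose k j : ℝ)
      = ∑ i ∈ Finset.range k, (-1 : ℝ) ^ (i+1) * (Nat.choose k (i+1) : ℝ) := by
    rw [← Finset.Ico_add_one_right_eq_Icc, Finset.sum_Ico_eq_sum_range]
    simp [Nat.add_comm 1]
  rw [this]
  simp at h'
  linarith [h']

lemma Tsum_vanish (α : ℝ) : ∀ m : ℕ, 1 ≤ m → ∀ k : ℕ, m < k → Tsum α m k = 0 := by
  intro m hm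
  induction m, hm using Nat.le_induction with
  | base =>
    intro k hk
    have hk1 : 1 ≤ k - 1 := by omega
    have : Tsum α (0 + 1) k = α * k * Tsum α 0 (k - 1) + ((0:ℕ) - α * k) * Tsum α 0 k :=
      Tsum_rec α 0 k (by omega)
    simpa [Tsum_zero_right α (k-1) hk1, Tsum_zero_right α k (by omega : 1 ≤ k)] using this
  | succ m hm ih =>
    intro k hk
    have h1 : Tsum α (m + 1) k = α * k * Tsum α m (k - 1) + ((m : ℝ) - α * k) * Tsum α m k :=
      Tsum_rec α m k (by omega)
    rw [h1, ih (k-1) (by omega), ih k (by omega)]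
    ring

lemma genStirling_zero_right (α : ℝ) (m : ℕ) : genStirling α m 0 = 0 := by
  simp [genStirling]

lemma genStirling_vanish (α : ℝ) {m k : ℕ} (hm : 1 ≤ m) (hk : m < k) :
    genStirling α m k = 0 := by
  rw [genStirling_eq, Tsum_vanish α m hm k hk, mul_zero]

lemma genStirling_one_one (α : ℝ) (hα : α ≠ 0) : genStirling α 1 1 = 1 := by
  simp [genStirling, risingFactorial, Finset.prod_range_succ]
  field_simp

lemma genStirling_rec (α : ℝ) (hα : α ≠ 0) (m k : ℕ) (hk : 1 ≤ k) :
    genStirling α (m + 1) k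
      = genStirling α m (k - 1) + ((m : ℝ) - α * k) * genStirling α m k := by
  obtain ⟨n, rfl⟩ : ∃ n, k = n + 1 := ⟨k - 1, by omega⟩
  simp only [genStirling_eq, Nat.add_sub_cancel]
  rw [Tsum_rec α m (n + 1) (by omega)]
  simp only [Nat.add_sub_cancel]
  have hfac : (Nat.factorial (n + 1) : ℝ) = (n + 1) * Nat.factorial n := by
    rw [Nat.factorial_succ]; push_cast; ring
  have hf0 : (Nat.factorial n : ℝ) ≠ 0 := Nat.cast_ne_zero.mpr (Nat.factorial_ne_zero n)
  have hpow : (α : ℝ) ^ (n + 1) ≠ 0 := pow_ne_zero _ hα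
  rw [hfac]
  field_simp
  push_cast
  ring

/-- `P_α^{(m)}(k) = α^{k-1} Γ(k) S_α(m,k) / Γ(m)`. -/
noncomputable def Pstat (α : ℝ) (m k : ℕ) : ℝ :=
  α ^ ((k : ℝ) - 1) * Real.Gamma (k : ℝ) * genStirling α m k / Real.Gamma (m : ℝ)

/-- `Ω_m(x) = Γ(m) Σ_{ℓ=1}^m P_α^{(m)}(ℓ) x^{ℓ-1}/Γ(ℓ)` for `m ≥ 1`, and `Ω_0(x) = x⁻¹/α`. -/
noncomputable def Omega (α : ℝ) (m : ℕ) (x : ℝ) : ℝ :=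
  if m = 0 then x⁻¹ / α
  else Real.Gamma (m : ℝ) * ∑ ℓ ∈ Finset.Icc 1 m, Pstat α m ℓ * x ^ (ℓ - 1) / Real.Gamma (ℓ : ℝ)

noncomputable def Gfun (α : ℝ) (m : ℕ) (l : ℝ) : ℝ :=
  Real.exp (-(l ^ α)) *
    ∑ k ∈ Finset.Icc 1 m, α ^ k * genStirling α m k * l ^ (α * (k : ℝ) - (m : ℝ))

lemma Omega_eval (α : ℝ) (hα : 0 < α) {m : ℕ} (hm : 1 ≤ m) {l : ℝ} (hl : 0 < l) :
    α * Real.exp (-(l ^ α)) * l ^ (α - (m : ℝ)) * Omega α m (l ^ α) = Gfun α m l := by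
  rw [Omega, if_neg (by omega), Gfun]
  rw [Finset.mul_sum, Finset.mul_sum, Finset.mul_sum]
  refine Finset.sum_congr rfl fun k hk => ?_
  simp only [Finset.mem_Icc] at hk
  obtain ⟨hk1, hkm⟩ := hk
  have hΓm : Real.Gamma (m : ℝ) ≠ 0 := by
    apply Real.Gamma_ne_zero
    intro n
    have : (0:ℝ) < (m:ℝ) := by exact_mod_cast (by omega : 0 < m)
    intro h; rw [h] at this; push_cast at this; linarith [Nat.cast_nonneg (α := ℝ) n]
  have hΓk : Real.Gamma (k : ℝ) ≠ 0 := by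
    apply Real.Gamma_ne_zero
    intro n
    have : (0:ℝ) < (k:ℝ) := by exact_mod_cast (by omega : 0 < k)
    intro h; rw [h] at this; push_cast at this; linarith [Nat.cast_nonneg (α := ℝ) n]
  rw [Pstat]
  have hpow1 : α * α ^ ((k : ℝ) - 1) = (α : ℝ) ^ k := by
    rw [show α * α ^ ((k:ℝ) - 1) = α ^ (1:ℝ) * α ^ ((k:ℝ)-1) by rw [Real.rpow_one]]
    rw [← Real.rpow_add hα, ← Real.rpow_natCast α k]
    norm_num
  have hpow2 : l ^ (α - (m : ℝ)) * ((l ^ α) ^ (k - 1) : ℝ) = l ^ (α * (k:ℝ) - (m:ℝ)) := by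
    rw [← Real.rpow_natCast (l ^ α) (k - 1), ← Real.rpow_mul hl.le]
    rw [← Real.rpow_add hl]
    congr 1
    have : ((k - 1 : ℕ) : ℝ) = (k : ℝ) - 1 := by
      push_cast [Nat.cast_sub hk1]; ring
    rw [this]; ring
  field_simp
  rw [← hpow1, ← hpow2]
  ring

lemma hasDerivAt_exp_rpow (α : ℝ) {l : ℝ} (hl : 0 < l) (β : ℝ) :
    HasDerivAt (fun x : ℝ => Real.exp (-(x ^ α)) * x ^ β)
      (Real.exp (-(l ^ α)) * (β * l ^ (β - 1) - α * l ^ (α - 1 + β))) l := by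
  have h1 : HasDerivAt (fun x : ℝ => x ^ α) (α * l ^ (α - 1)) l :=
    Real.hasDerivAt_rpow_const (Or.inl hl.ne')
  have h2 : HasDerivAt (fun x : ℝ => Real.exp (-(x ^ α)))
      (Real.exp (-(l ^ α)) * (-(α * l ^ (α - 1)))) l := h1.neg.exp
  have h3 : HasDerivAt (fun x : ℝ => x ^ β) (β * l ^ (β - 1)) l :=
    Real.hasDerivAt_rpow_const (Or.inl hl.ne')
  have h4 := h2.mul h3
  refine h4.congr_deriv ?_
  have : l ^ (α - 1 + β) = l ^ (α - 1) * l ^ β := Real.rpow_add hl _ _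
  rw [this]; ring

lemma Gfun_one (α : ℝ) (hα : α ≠ 0) (l : ℝ) :
    Gfun α 1 l = Real.exp (-(l ^ α)) * (α * l ^ (α - 1)) := by
  rw [Gfun]
  rw [show Finset.Icc 1 1 = {1} by rfl]
  rw [Finset.sum_singleton, genStirling_one_one α hα]
  norm_num

lemma hasDerivAt_exp_neg_rpow (α : ℝ) (hα : α ≠ 0) {l : ℝ} (hl : 0 < l) :
    HasDerivAt (fun x : ℝ => Real.exp (-(x ^ α))) (-(Gfun α 1 l)) l := by
  have h1 : HasDerivAt (fun x : ℝ => x ^ α) (α * l ^ (α - 1)) l :=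
    Real.hasDerivAt_rpow_const (Or.inl hl.ne')
  have h2 := h1.neg.exp
  refine h2.congr_deriv ?_
  rw [Gfun_one α hα]
  simp only [Pi.neg_apply]
  ring

lemma Gfun_deriv (α : ℝ) (hα0 : 0 < α) {m : ℕ} (hm : 1 ≤ m) {l : ℝ} (hl : 0 < l) :
    HasDerivAt (Gfun α m) (-(Gfun α (m + 1) l)) l := by
  have hGeq : Gfun α m = fun x : ℝ => ∑ k ∈ Finset.Icc 1 m,
      α ^ k * genStirling α m k * (Real.exp (-(x ^ α)) * x ^ (α * (k:ℝ) - (m:ℝ))) := by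
    funext x
    rw [Gfun, Finset.mul_sum]
    exact Finset.sum_congr rfl fun k _ => by ring
  rw [hGeq]
  have hterm : ∀ k ∈ Finset.Icc 1 m,
      HasDerivAt (fun x : ℝ => α ^ k * genStirling α m k *
          (Real.exp (-(x ^ α)) * x ^ (α * (k:ℝ) - (m:ℝ))))
        (α ^ k * genStirling α m k *
          (Real.exp (-(l ^ α)) * ((α * (k:ℝ) - (m:ℝ)) * l ^ (α * (k:ℝ) - (m:ℝ) - 1)
            - α * l ^ (α - 1 + (α * (k:ℝ) - (m:ℝ)))))) l :=
    fun k _ => (hasDerivAt_exp_rpow α hl _).const_mul _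
  have hsum := HasDerivAt.fun_sum hterm
  refine hsum.congr_deriv ?_
  symm
  -- algebraic identity
  rw [Gfun]
  rw [← Finset.Ico_add_one_right_eq_Icc, Finset.sum_Ico_eq_sum_range]
  conv_rhs => rw [← Finset.Ico_add_one_right_eq_Icc, Finset.sum_Ico_eq_sum_range]
  simp only [Nat.add_sub_cancel]
  have hrw : ∀ i ∈ Finset.range (m + 1),
      α ^ (1 + i) * genStirling α (m + 1) (1 + i) * l ^ (α * ((1 + i : ℕ) : ℝ) - ((m + 1 : ℕ) : ℝ))
      = α ^ (1 + i) * genStirling α m i * l ^ (α * ((1 + i : ℕ) : ℝ) - ((m + 1 : ℕ) : ℝ))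
        + α ^ (1 + i) * ((m : ℝ) - α * ((1 + i : ℕ) : ℝ)) * genStirling α m (1 + i)
            * l ^ (α * ((1 + i : ℕ) : ℝ) - ((m + 1 : ℕ) : ℝ)) := by
    intro i _
    rw [genStirling_rec α hα0.ne' m (1 + i) (by omega)]
    rw [Nat.add_sub_cancel_left]
    ring
  rw [Finset.sum_congr rfl hrw, Finset.sum_add_distrib]
  rw [Finset.sum_range_succ', Finset.sum_range_succ]
  rw [genStirling_zero_right, genStirling_vanish α hm (by omega : m < 1 + m)]
  simp only [mul_zero, zero_mul, add_zero]
  rw [mul_add, Finset.mul_sum, Finset.mul_sum, neg_add, ← Finset.sum_neg_distrib,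
    ← Finset.sum_neg_distrib, ← Finset.sum_add_distrib]
  refine Finset.sum_congr rfl fun i hi => ?_
  have e1 : l ^ (α * ((1 + (i + 1) : ℕ) : ℝ) - ((m + 1 : ℕ) : ℝ))
      = l ^ (α - 1 + (α * ((1 + i : ℕ) : ℝ) - (m : ℝ))) := by
    congr 1; push_cast; ring
  have e2 : l ^ (α * ((1 + i : ℕ) : ℝ) - ((m + 1 : ℕ) : ℝ))
      = l ^ (α * ((1 + i : ℕ) : ℝ) - (m : ℝ) - 1) := by
    congr 1; push_cast; ring
  rw [e1, e2]
  simp only [Nat.add_comm 1]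
  push_cast
  ring

/-- **Moment formula (eq. (momentrep)).** If `f_α` is the density of a positive `α`-stable
random variable, then for `m ≥ 1` and `λ > 0`,
`∫₀^∞ t^m e^{-λ t} f_α(t) dt = α e^{-λ^α} λ^{α-m} Ω_m(λ^α)`; in particular
`∫₀^∞ t e^{-λ t} f_α(t) dt = α λ^{α-1} e^{-λ^α}`. -/
theorem stmt4 (α : ℝ) (hα : α ∈ Set.Ioo (0 : ℝ) 1) (f : ℝ → ℝ) (hfmeas : Measurable f)
    (hfnn : ∀ t ∈ Set.Ioi (0 : ℝ), 0 ≤ f t)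
    (hfint : ∫ t in Set.Ioi (0 : ℝ), f t = 1)
    (hflap : ∀ c : ℝ, 0 ≤ c →
      ∫ t in Set.Ioi (0 : ℝ), Real.exp (-c * t) * f t = Real.exp (-(c ^ α))) :
    (∀ m : ℕ, 1 ≤ m → ∀ lam : ℝ, 0 < lam →
        ∫ t in Set.Ioi (0 : ℝ), t ^ m * Real.exp (-lam * t) * f t
          = α * Real.exp (-(lam ^ α)) * lam ^ (α - (m : ℝ)) * Omega α m (lam ^ α)) ∧
      (∀ lam : ℝ, 0 < lam →
        ∫ t in Set.Ioi (0 : ℝ), t * Real.exp (-lam * t) * f t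
          = α * lam ^ (α - 1) * Real.exp (-(lam ^ α))) := by
  obtain ⟨hα0, hα1⟩ := hα
  have hmeasF : ∀ (m : ℕ) (c : ℝ), AEStronglyMeasurable
      (fun t => t ^ m * Real.exp (-c * t) * f t) (volume.restrict (Ioi (0:ℝ))) := by
    intro m c
    exact (((measurable_id.pow_const m).mul
      ((measurable_id.const_mul (-c)).exp)).mul hfmeas).aestronglyMeasurable
  have hexpInt : ∀ c : ℝ, 0 ≤ c →
      IntegrableOn (fun t => Real.exp (-c * t) * f t) (Ioi (0:ℝ)) := by
    intro c hc
    by_contra h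
    have h2 := hflap c hc
    rw [MeasureTheory.integral_undef h] at h2
    exact (Real.exp_pos (-(c ^ α))).ne' h2.symm
  have hb : ∀ (m : ℕ) (c : ℝ), 0 < c → ∀ t : ℝ, 0 ≤ t →
      t ^ m * Real.exp (-c * t) ≤ (Nat.factorial m) * (2 / c) ^ m * Real.exp (-(c / 2) * t) := by
    intro m c hc t ht
    have h1 : ((c / 2) * t) ^ m / (Nat.factorial m) ≤ Real.exp ((c / 2) * t) :=
      Real.pow_div_factorial_le_exp (x := (c/2)*t) (by positivity) m
    have hfac : (0:ℝ) < Nat.factorial m := by exact_mod_cast Nat.factorial_pos m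
    have h2 : t ^ m ≤ (Nat.factorial m) * (2 / c) ^ m * Real.exp ((c/2) * t) := by
      have h1' := (div_le_iff₀ hfac).mp h1
      rw [mul_pow] at h1'
      have hcc : ((2:ℝ)/c) ^ m * ((c/2)^m) = 1 := by
        rw [← mul_pow]
        rw [show (2/c) * (c/2) = 1 by field_simp]
        exact one_pow m
      calc t ^ m = ((2/c) ^ m) * ((c/2)^m * t ^ m) := by
            rw [← mul_assoc, hcc, one_mul]
        _ ≤ (2/c)^m * (Real.exp ((c/2)*t) * Nat.factorial m) :=
            mul_le_mul_of_nonneg_left h1' (by positivity)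
        _ = Nat.factorial m * (2/c)^m * Real.exp ((c/2)*t) := by ring
    calc t ^ m * Real.exp (-c * t)
        ≤ ((Nat.factorial m) * (2/c)^m * Real.exp ((c/2)*t)) * Real.exp (-c*t) :=
          mul_le_mul_of_nonneg_right h2 (Real.exp_pos _).le
      _ = (Nat.factorial m) * (2/c)^m * (Real.exp ((c/2)*t) * Real.exp (-c*t)) := by ring
      _ = (Nat.factorial m) * (2/c)^m * Real.exp (-(c/2)*t) := by
          rw [← Real.exp_add]; congr 1; ring
  have hInt : ∀ (m : ℕ) (c : ℝ), 0 < c →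
      IntegrableOn (fun t => t ^ m * Real.exp (-c * t) * f t) (Ioi (0:ℝ)) := by
    intro m c hc
    have hbint : IntegrableOn
        (fun t => ((Nat.factorial m : ℝ) * (2/c)^m) * (Real.exp (-(c/2) * t) * f t))
        (Ioi (0:ℝ)) := (hexpInt (c/2) (by positivity)).const_mul _
    refine Integrable.mono' hbint (hmeasF m c) ?_
    refine (ae_restrict_iff' measurableSet_Ioi).mpr (Filter.Eventually.of_forall fun t ht => ?_)
    have ht' : (0:ℝ) < t := ht
    have hfnn' := hfnn t ht
    rw [Real.norm_eq_abs, abs_of_nonneg (mul_nonneg (mul_nonneg (pow_nonneg ht'.le m)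
      (Real.exp_pos _).le) hfnn')]
    calc t^m * Real.exp (-c*t) * f t
        ≤ ((Nat.factorial m) * (2/c)^m * Real.exp (-(c/2)*t)) * f t :=
          mul_le_mul_of_nonneg_right (hb m c hc t ht'.le) hfnn'
      _ = (Nat.factorial m) * (2/c)^m * (Real.exp (-(c/2)*t) * f t) := by ring
  have hDer : ∀ (m : ℕ) (l : ℝ), 0 < l →
      HasDerivAt (fun c => ∫ t in Ioi (0:ℝ), t ^ m * Real.exp (-c * t) * f t)
        (∫ t in Ioi (0:ℝ), -(t ^ (m+1) * Real.exp (-l * t) * f t)) l := by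
    intro m l hl
    have hball : ∀ c ∈ Metric.ball l (l/2), l/2 < c := by
      intro c hc
      rw [Metric.mem_ball, Real.dist_eq, abs_lt] at hc
      linarith [hc.1]
    have h := hasDerivAt_integral_of_dominated_loc_of_deriv_le
      (μ := volume.restrict (Ioi (0:ℝ)))
      (F := fun c t => t ^ m * Real.exp (-c * t) * f t)
      (F' := fun c t => -(t ^ (m+1) * Real.exp (-c * t) * f t))
      (x₀ := l) (s := Metric.ball l (l/2))
      (bound := fun t => t^(m+1) * Real.exp (-(l/2) * t) * f t)
      (Metric.ball_mem_nhds l (by positivity))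
      (Filter.Eventually.of_forall fun c => hmeasF m c)
      (hInt m l hl)
      ((hmeasF (m+1) l).neg)
      ?_ (hInt (m+1) (l/2) (by positivity)) ?_
    · exact h.2
    · refine (ae_restrict_iff' measurableSet_Ioi).mpr
        (Filter.Eventually.of_forall fun t ht c hc => ?_)
      have ht' : (0:ℝ) < t := ht
      have hfnn' := hfnn t ht
      rw [norm_neg, Real.norm_eq_abs, abs_of_nonneg (mul_nonneg (mul_nonneg
        (pow_nonneg ht'.le _) (Real.exp_pos _).le) hfnn')]
      have hee : Real.exp (-c * t) ≤ Real.exp (-(l/2) * t) := by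
        apply Real.exp_le_exp.mpr
        nlinarith [hball c hc, ht']
      have h1 : t^(m+1) * Real.exp (-c*t) ≤ t^(m+1) * Real.exp (-(l/2)*t) :=
        mul_le_mul_of_nonneg_left hee (pow_nonneg ht'.le _)
      exact mul_le_mul_of_nonneg_right h1 hfnn'
    · refine (ae_restrict_iff' measurableSet_Ioi).mpr
        (Filter.Eventually.of_forall fun t ht c hc => ?_)
      have h0 : HasDerivAt (fun c : ℝ => -c * t) (-1 * t) c := (hasDerivAt_id c).neg.mul_const t
      have hd := h0.exp
      have h2 := (hd.const_mul (t^m)).mul_const (f t)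
      refine h2.congr_deriv ?_
      ring
  have hEq0 : ∀ l : ℝ, 0 < l →
      (∫ t in Ioi (0:ℝ), t ^ 0 * Real.exp (-l * t) * f t) = Real.exp (-(l ^ α)) := by
    intro l hl
    rw [← hflap l hl.le]
    simp
  have key : ∀ m : ℕ, 1 ≤ m → ∀ l : ℝ, 0 < l →
      (∫ t in Ioi (0:ℝ), t ^ m * Real.exp (-l * t) * f t) = Gfun α m l := by
    intro m hm
    induction m, hm using Nat.le_induction with
    | base =>
      intro l hl
      have hD := hDer 0 l hl
      have hEv : (fun c => ∫ t in Ioi (0:ℝ), t ^ 0 * Real.exp (-c * t) * f t)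
          =ᶠ[nhds l] (fun c : ℝ => Real.exp (-(c ^ α))) :=
        Filter.eventuallyEq_of_mem (Ioi_mem_nhds hl) (fun c hc => hEq0 c hc)
      have hD' : HasDerivAt (fun c : ℝ => Real.exp (-(c ^ α)))
          (∫ t in Ioi (0:ℝ), -(t ^ (0+1) * Real.exp (-l * t) * f t)) l :=
        (hEv.hasDerivAt_iff).mp hD
      have hD2 := hasDerivAt_exp_neg_rpow α hα0.ne' hl
      have h := hD'.unique hD2
      rw [integral_neg] at h
      exact neg_injective h
    | succ m hm ih =>
      intro l hl
      have hD := hDer m l hl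
      have hEv : (fun c => ∫ t in Ioi (0:ℝ), t ^ m * Real.exp (-c * t) * f t)
          =ᶠ[nhds l] Gfun α m :=
        Filter.eventuallyEq_of_mem (Ioi_mem_nhds hl) (fun c hc => ih c hc)
      have hD' : HasDerivAt (Gfun α m)
          (∫ t in Ioi (0:ℝ), -(t ^ (m+1) * Real.exp (-l * t) * f t)) l :=
        (hEv.hasDerivAt_iff).mp hD
      have hD2 := Gfun_deriv α hα0 hm hl
      have h := hD'.unique hD2
      rw [integral_neg] at h
      exact neg_injective h
  constructor
  · intro m hm lam hlam
    rw [key m hm lam hlam]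
    exact (Omega_eval α hα0 hm hlam).symm
  · intro lam hlam
    have h1 := key 1 le_rfl lam hlam
    rw [Gfun_one α hα0.ne'] at h1
    have h2 : (∫ t in Ioi (0:ℝ), t * Real.exp (-lam * t) * f t)
        = ∫ t in Ioi (0:ℝ), t ^ 1 * Real.exp (-lam * t) * f t := by simp
    rw [h2, h1]; ring
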